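/- The generalized cut rule with server leftovers is derivable in nodcap: from P ⊢ Γ, x:!ₙA and Q ⊢ Δ, x':?_{n+m}(A^⊥), there is a process R built from P, Q, a link and cut such that R ⊢ Γ, Δ, w:?ₘ(A^⊥). -/

import Mathlib

/-! # nodcap: HCP extended with non-deterministic clients and servers -/

/-- nodcap session types: HCP types extended with client pools !ₙA and server interactions ?ₙA. -/
inductive Ty : Type
  | tens : Ty → Ty → Ty
  | parr : Ty → Ty → Ty
  | plus : Ty → Ty → Ty
  | wth  : Ty → Ty → Ty
  | one  : Ty
  | bot  : Ty
  | zero : Ty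
  | top  : Ty
  | bang  : ℕ → Ty → Ty     -- !ₙA : pool of n clients
  | quest : ℕ → Ty → Ty     -- ?ₙA : n server interactions

/-- Duality on HCP session types. -/
def Ty.dual : Ty → Ty
  | .tens A B => .parr A.dual B.dual
  | .parr A B => .tens A.dual B.dual
  | .plus A B => .wth A.dual B.dual
  | .wth A B  => .plus A.dual B.dual
  | .one => .bot
  | .bot => .one
  | .zero => .top
  | .top => .zero
  | .bang n A => .quest n A.dual
  | .quest n A => .bang n A.dual

/-- nodcap process terms: HCP terms extended with client creation and server interaction.  Endpoint names are natural numbers. -/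
inductive Proc : Type
  | link : ℕ → ℕ → Proc                -- x ↔ y
  | halt : Proc                        -- terminated process 0
  | nu : ℕ → ℕ → Proc → Proc           -- (νxx')P, "cut"
  | par : Proc → Proc → Proc           -- P ∣ Q, "mix"
  | out : ℕ → ℕ → Proc → Proc          -- x[y].P   (bound output)
  | inp : ℕ → ℕ → Proc → Proc          -- x(y).P
  | close : ℕ → Proc → Proc            -- x[].P
  | wait : ℕ → Proc → Proc             -- x().P
  | inl : ℕ → Proc → Proc              -- x◁inl.P
  | inr : ℕ → Proc → Proc              -- x◁inr.P
  | branch : ℕ → Proc → Proc → Proc    -- x▷{P;Q}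
  | absurd : ℕ → Proc                  -- x▷{}
  | cout : ℕ → ℕ → Proc → Proc         -- ⋆x[y].P  client creation
  | cinp : ℕ → ℕ → Proc → Proc         -- ⋆x(y).P  server interaction

namespace Proc

/-- Rename the name `y` to `w` if `y = x`. -/
def subn (w x y : ℕ) : ℕ := if y = x then w else y

/-- Renaming `P[w/x]` of the free name `x` to `w` (stopping under binders for `x`). -/
def subst : Proc → ℕ → ℕ → Proc
  | link a b, w, x => link (subn w x a) (subn w x b)
  | halt, _, _ => halt
  | nu a b P, w, x => if a = x ∨ b = x then nu a b P else nu a b (P.subst w x)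
  | par P Q, w, x => par (P.subst w x) (Q.subst w x)
  | out a b P, w, x =>
      if b = x then out (subn w x a) b P else out (subn w x a) b (P.subst w x)
  | inp a b P, w, x =>
      if b = x then inp (subn w x a) b P else inp (subn w x a) b (P.subst w x)
  | close a P, w, x => close (subn w x a) (P.subst w x)
  | wait a P, w, x => wait (subn w x a) (P.subst w x)
  | inl a P, w, x => inl (subn w x a) (P.subst w x)
  | inr a P, w, x => inr (subn w x a) (P.subst w x)
  | branch a P Q, w, x => branch (subn w x a) (P.subst w x) (Q.subst w x)
  | absurd a, w, x => absurd (subn w x a)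
  | cout a b P, w, x =>
      if b = x then cout (subn w x a) b P else cout (subn w x a) b (P.subst w x)
  | cinp a b P, w, x =>
      if b = x then cinp (subn w x a) b P else cinp (subn w x a) b (P.subst w x)

/-- Free names of a process. -/
def fn : Proc → Finset ℕ
  | link a b => {a, b}
  | halt => ∅
  | nu a b P => P.fn \ {a, b}
  | par P Q => P.fn ∪ Q.fn
  | out a b P => insert a (P.fn \ {b})
  | inp a b P => insert a (P.fn \ {b})
  | close a P => insert a P.fn
  | wait a P => insert a P.fn
  | inl a P => insert a P.fn
  | inr a P => insert a P.fn
  | branch a P Q => insert a (P.fn ∪ Q.fn)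
  | absurd a => {a}
  | cout a b P => insert a (P.fn \ {b})
  | cinp a b P => insert a (P.fn \ {b})

/-- Structural congruence of HCP processes: the congruence closure of
link symmetry, commutativity/associativity of `∣` with unit `0`,
garbage collection and commutation of name restriction, and scope extrusion. -/
inductive Cong : Proc → Proc → Prop
  | refl (P) : Cong P P
  | symm : Cong P Q → Cong Q P
  | trans : Cong P Q → Cong Q R → Cong P R
  -- congruence rules
  | nu_congr : Cong P Q → Cong (nu a b P) (nu a b Q)
  | par_congr : Cong P P' → Cong Q Q' → Cong (par P Q) (par P' Q')
  | out_congr : Cong P Q → Cong (out a b P) (out a b Q)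
  | inp_congr : Cong P Q → Cong (inp a b P) (inp a b Q)
  | close_congr : Cong P Q → Cong (close a P) (close a Q)
  | wait_congr : Cong P Q → Cong (wait a P) (wait a Q)
  | inl_congr : Cong P Q → Cong (inl a P) (inl a Q)
  | inr_congr : Cong P Q → Cong (inr a P) (inr a Q)
  | branch_congr : Cong P P' → Cong Q Q' → Cong (branch a P Q) (branch a P' Q')
  | cout_congr : Cong P Q → Cong (cout a b P) (cout a b Q)
  | cinp_congr : Cong P Q → Cong (cinp a b P) (cinp a b Q)
  -- axioms
  | link_comm (a b) : Cong (link a b) (link b a)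
  | par_comm (P Q) : Cong (par P Q) (par Q P)
  | par_assoc (P Q R) : Cong (par P (par Q R)) (par (par P Q) R)
  | par_halt (P) : Cong (par P halt) P
  | nu_halt (a b) : Cong (nu a b halt) halt
  | nu_comm (a b c d P) : Cong (nu a b (nu c d P)) (nu c d (nu a b P))
  | scope_ext (a b P Q) : a ∉ P.fn → b ∉ P.fn →
      Cong (nu a b (par P Q)) (par P (nu a b Q))

end Proc

/-- Typing environments: multisets of (endpoint, type) pairs. -/
abbrev Env : Type := Multiset (ℕ × Ty)

/-- Hyper-environments: multisets of environments. -/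
abbrev Hyper : Type := Multiset Env

open Proc in
/-- The nodcap typing judgement `P ⊢ G`: the HCP rules (Ax, Cut, H-Mix, H-Mix₀,
and the logical rules for ⊗, ⅋, 1, ⊥, ⊕, &, ⊤, acting on a single
environment), extended with (!₁), (?₁), Cont_! and Cont_?. -/
inductive Typed : Proc → Hyper → Prop
  | ax : Typed (link x y) {({(x, Ty.dual A), (y, A)} : Env)}
  | cut : Typed P (((x, A) ::ₘ Γ) ::ₘ ((x', Ty.dual A) ::ₘ Δ) ::ₘ G) →
      Typed (nu x x' P) ((Γ + Δ) ::ₘ G)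
  | mix : Typed P G → Typed Q H → Typed (par P Q) (G + H)
  | mix₀ : Typed halt (0 : Hyper)
  | tens : Typed P (((y, A) ::ₘ Γ) ::ₘ {((x, B) ::ₘ Δ)}) →
      Typed (out x y P) {((x, Ty.tens A B) ::ₘ (Γ + Δ))}
  | parr : Typed P {((y, A) ::ₘ (x, B) ::ₘ Γ)} →
      Typed (inp x y P) {((x, Ty.parr A B) ::ₘ Γ)}
  | one : Typed P (0 : Hyper) → Typed (close x P) {({(x, Ty.one)} : Env)}
  | bot : Typed P {Γ} → Typed (wait x P) {((x, Ty.bot) ::ₘ Γ)}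
  | plus₁ : Typed P {((x, A) ::ₘ Γ)} → Typed (inl x P) {((x, Ty.plus A B) ::ₘ Γ)}
  | plus₂ : Typed P {((x, B) ::ₘ Γ)} → Typed (inr x P) {((x, Ty.plus A B) ::ₘ Γ)}
  | wth : Typed P {((x, A) ::ₘ Γ)} → Typed Q {((x, B) ::ₘ Γ)} →
      Typed (branch x P Q) {((x, Ty.wth A B) ::ₘ Γ)}
  | top : Typed (absurd x) {((x, Ty.top) ::ₘ Γ)}
  | client : Typed P {((y, A) ::ₘ Γ)} →
      Typed (cout x y P) {((x, Ty.bang 1 A) ::ₘ Γ)}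
  | server : Typed P {((y, A) ::ₘ Γ)} →
      Typed (cinp x y P) {((x, Ty.quest 1 A) ::ₘ Γ)}
  | cont_client :
      Typed P (((x, Ty.bang m A) ::ₘ Γ) ::ₘ ((x', Ty.bang n A) ::ₘ Δ) ::ₘ G) →
      Typed (P.subst x x') (((x, Ty.bang (m + n) A) ::ₘ (Γ + Δ)) ::ₘ G)
  | cont_server :
      Typed P (((y, Ty.quest m A) ::ₘ (y', Ty.quest n A) ::ₘ Γ) ::ₘ G) →
      Typed (P.subst y y') (((y, Ty.quest (m + n) A) ::ₘ Γ) ::ₘ G)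

open Proc in
/-- Reduction of nodcap processes: the HCP rules (link rule, principal cut
(β) rules, closed under name restriction, parallel composition on the left,
and structural congruence on both sides) extended with the rule (β⋆). -/
inductive Red : Proc → Proc → Prop
  | link_cut : Red (nu x x' (par (link w x) P)) (P.subst w x')
  | beta_tens_parr :
      Red (nu x x' (par (out x y P) (inp x' y' Q))) (nu x x' (nu y y' (par P Q)))
  | beta_one_bot : Red (nu x x' (par (close x P) (wait x' Q))) (par P Q)
  | beta_plus_wth₁ :
      Red (nu x x' (par (inl x P) (branch x' Q R))) (nu x x' (par P Q))
  | beta_plus_wth₂ :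
      Red (nu x x' (par (inr x P) (branch x' Q R))) (nu x x' (par P R))
  | beta_star :
      Red (nu x x' (par (par (cout x y P) (cinp x' y' Q)) R))
          (nu x x' (par (nu y y' (par P Q)) R))
  | res : Red P P' → Red (nu x x' P) (nu x x' P')
  | mix : Red P P' → Red (par P Q) (par P' Q)
  | congr : Proc.Cong P Q → Red Q Q' → Proc.Cong Q' P' → Red P P'

namespace Proc

/-- `P` acts on `x` when `x` is free in the outermost term constructor of `P`. -/
def ActsOn : Proc → ℕ → Prop
  | link a b, x => x = a ∨ x = b
  | halt, _ => False
  | nu _ _ _, _ => False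
  | par _ _, _ => False
  | out a _ _, x => x = a
  | inp a _ _, x => x = a
  | close a _, x => x = a
  | wait a _, x => x = a
  | inl a _, x => x = a
  | inr a _, x => x = a
  | branch a _ _, x => x = a
  | absurd a, x => x = a
  | cout a _ _, x => x = a
  | cinp a _ _, x => x = a

/-- `P` is a cut (name restriction) or a mix (parallel composition). -/
def IsCutOrMix : Proc → Prop
  | nu _ _ _ => True
  | par _ _ => True
  | _ => False

/-- `P` is a link. -/
def IsLink : Proc → Prop
  | link _ _ => True
  | _ => False

/-- `(νx₁x₁')⋯(νxₙxₙ')Q` for the list `xs = [(x₁,x₁'),…,(xₙ,xₙ')]`. -/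
def nuAll (xs : List (ℕ × ℕ)) (Q : Proc) : Proc :=
  xs.foldr (fun p acc => nu p.1 p.2 acc) Q

/-- `P₁ ∣ ⋯ ∣ Pₖ`. -/
def parAll : List Proc → Proc
  | [] => halt
  | [P] => P
  | P :: Ps => par P (parAll Ps)

/-- The side conditions of canonical form for a decomposition
`(νx₁x₁')⋯(νxₙxₙ')(P₁ ∣ ⋯ ∣ P_{n+m+1})`: no `Pᵢ` is a cut or a mix, no `Pᵢ`
is a link acting on a bound channel, and no two `Pᵢ`, `Pⱼ` act on dual
endpoints of the same channel. -/
def CanonDecomp (xs : List (ℕ × ℕ)) (Ps : List Proc) : Prop :=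
  xs.length < Ps.length ∧
  (∀ Pi ∈ Ps, ¬ Pi.IsCutOrMix) ∧
  (∀ Pi ∈ Ps, Pi.IsLink → ∀ p ∈ xs, ¬ Pi.ActsOn p.1 ∧ ¬ Pi.ActsOn p.2) ∧
  (∀ i j : Fin Ps.length, i ≠ j → ∀ p ∈ xs,
    ¬ ((Ps.get i).ActsOn p.1 ∧ (Ps.get j).ActsOn p.2))

/-- A process is in canonical form if it is structurally congruent to a
decomposition satisfying `CanonDecomp`. -/
def Canonical (P : Proc) : Prop :=
  ∃ xs Ps, Cong P (nuAll xs (parAll Ps)) ∧ CanonDecomp xs Ps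

end Proc

lemma Ty.dual_dual (A : Ty) : A.dual.dual = A := by
  induction A <;> simp [Ty.dual, *]

open Proc in
/-- The generalized cut rule with server leftovers is derivable in nodcap:
from `P ⊢ Γ, x:!ₙA` and `Q ⊢ Δ, x':?_{n+m}(A^⊥)`, there is a process `R`
with `R ⊢ Γ, Δ, w:?ₘ(A^⊥)`. -/
theorem nodcap_cut_server_leftovers (Γ Δ : Env) (A : Ty) (P Q : Proc)
    (x x' w : ℕ) (n m : ℕ)
    (hP : Typed P {((x, Ty.bang n A) ::ₘ Γ)})
    (hQ : Typed Q {((x', Ty.quest (n + m) A.dual) ::ₘ Δ)}) :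
    ∃ R : Proc, Typed R {((w, Ty.quest m A.dual) ::ₘ (Γ + Δ))} := by
  have hlink : Typed (link w w)
      {((w, Ty.bang m A) ::ₘ ({(w, Ty.quest m A.dual)} : Env))} := by
    have h := @Typed.ax w w (Ty.quest m A.dual)
    have hd : ((Ty.quest m A.dual).dual) = Ty.bang m A := by
      simp [Ty.dual, Ty.dual_dual]
    rw [hd] at h
    exact h
  have hmix := Typed.mix hP hlink
  have hmix' : Typed (par P (link w w))
      (((x, Ty.bang n A) ::ₘ Γ) ::ₘ
        ((w, Ty.bang m A) ::ₘ ({(w, Ty.quest m A.dual)} : Env)) ::ₘ (0 : Hyper)) := by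
    convert hmix using 1
    simp [Multiset.singleton_add]
  have hc := Typed.cont_client hmix'
  have hmix2 := Typed.mix hc hQ
  have hmix2' : Typed (par ((par P (link w w)).subst x w) Q)
      (((x, Ty.bang (n + m) A) ::ₘ (Γ + ({(w, Ty.quest m A.dual)} : Env))) ::ₘ
        ((x', (Ty.bang (n + m) A).dual) ::ₘ Δ) ::ₘ (0 : Hyper)) := by
    have hd : (Ty.bang (n + m) A).dual = Ty.quest (n + m) A.dual := rfl
    rw [hd]
    convert hmix2 using 1
    simp [Multiset.singleton_add]
  have hcut := Typed.cut hmix2'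
  have he : Γ + ({(w, Ty.quest m A.dual)} : Env) + Δ
      = (w, Ty.quest m A.dual) ::ₘ (Γ + Δ) := by
    rw [add_comm Γ ({(w, Ty.quest m A.dual)} : Env), Multiset.singleton_add,
      Multiset.cons_add]
  rw [he] at hcut
  exact ⟨_, hcut⟩
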